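/- arXiv:2110.08092 — 2 statements merged into one kernel-verified Lean document; each statement's English description precedes it below -/
import Mathlib

section
/- Let n ≥ D and let j = [j_1, …, j_D] be a tuple of D pairwise distinct elements of {1, …, n}. Then there exists a unique element g of the set H_D = {σ_D σ_{D-1} ⋯ σ_1 : σ_i ∈ C_{n-D+i}} such that g · j_d = d for all d = 1, …, D, where C_{n-i} denotes the cyclic group of order n-i acting cyclically on the set {i+1, …, n} and fixing {1, …, i} pointwise. Consequently, the map j ↦ g is a bijection from the set of D-tuples of distinct elements of {1, …, n} to H_D. -/
/-- The equivalence between `Fin (n - i)` and the elements of `Fin n` that are `≥ i`. -/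
def shiftEquiv (n i : ℕ) : Fin (n - i) ≃ {j : Fin n // i ≤ (j : ℕ)} where
  toFun k := ⟨⟨i + k.val, by omega⟩, by simp⟩
  invFun j := ⟨(j : Fin n).val - i, by omega⟩
  left_inv k := by ext; simp
  right_inv j := by
    apply Subtype.ext
    apply Fin.ext
    have := j.2
    simp
    omega

/-- The cyclic permutation of order `n - i` on `{i+1, …, n}` (0-indexed: on the
elements of `Fin n` that are `≥ i`), fixing `{1, …, i}` pointwise.
Its powers form the cyclic group `C_{n-i}` of the paper. -/
def cyc (n i : ℕ) : Equiv.Perm (Fin n) :=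
  (finRotate (n - i)).extendDomain (shiftEquiv n i)

/-- `H_D = {σ_D ⋯ σ_1 : σ_i ∈ C_{n-D+i}}`: the set of products of one element of
each cyclic group `C_{n-D+i}` (the factor from `C_n` being applied first, then the
factor from `C_{n-1}`, …, the factor from `C_{n-D+1}` applied last). -/
def HD (n D : ℕ) : Set (Equiv.Perm (Fin n)) :=
  {g | ∃ σ : Fin D → Equiv.Perm (Fin n),
    (∀ d : Fin D, σ d ∈ Subgroup.zpowers (cyc n d.val)) ∧
      g = (List.ofFn σ).reverse.prod}

open Fin.NatCast in
lemma finRotate_pow_apply (m k : ℕ) (i : Fin (m+1)) :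
    ((finRotate (m+1))^k) i = i + (k : Fin (m+1)) := by
  induction k generalizing i with
  | zero => simp
  | succ k ih =>
    rw [pow_succ, Equiv.Perm.mul_apply, finRotate_succ_apply, ih]
    push_cast
    abel

open Fin.NatCast in
lemma orderOf_finRotate' (m : ℕ) : orderOf (finRotate (m+1)) = m+1 := by
  rw [orderOf_eq_iff (Nat.succ_pos m)]
  refine ⟨?_, ?_⟩
  · ext i
    simp [finRotate_pow_apply]
  · intro k hk hk0 h
    have h0 : ((finRotate (m+1))^k) 0 = 0 := by rw [h]; rfl
    rw [finRotate_pow_apply, zero_add, Fin.natCast_eq_zero] at h0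
    have := Nat.le_of_dvd hk0 h0
    omega

lemma orderOf_cyc {n i : ℕ} (hi : i < n) : orderOf (cyc n i) = n - i := by
  obtain ⟨m, hm⟩ : ∃ m, n - i = m + 1 := ⟨n - i - 1, by omega⟩
  have : cyc n i = Equiv.Perm.extendDomainHom (shiftEquiv n i) (finRotate (n - i)) := rfl
  rw [this, orderOf_injective _ (Equiv.Perm.extendDomainHom_injective _), hm,
    orderOf_finRotate']

lemma cyc_mem_fix {n i : ℕ} {σ : Equiv.Perm (Fin n)}
    (hσ : σ ∈ Subgroup.zpowers (cyc n i)) {x : Fin n} (hx : (x : ℕ) < i) : σ x = x := by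
  obtain ⟨k, rfl⟩ := Subgroup.mem_zpowers_iff.mp hσ
  exact Function.IsFixedPt.perm_zpow
    (Equiv.Perm.extendDomain_apply_not_subtype _ (shiftEquiv n i) (by omega)) k

lemma cyc_mem_ge {n i : ℕ} {σ : Equiv.Perm (Fin n)}
    (hσ : σ ∈ Subgroup.zpowers (cyc n i)) {x : Fin n} (hx : i ≤ (x : ℕ)) :
    i ≤ ((σ x : Fin n) : ℕ) := by
  obtain ⟨k, rfl⟩ := Subgroup.mem_zpowers_iff.mp hσ
  rw [cyc, ← Equiv.Perm.extendDomain_zpow]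
  rw [Equiv.Perm.extendDomain_apply_subtype (finRotate (n - i) ^ k) (shiftEquiv n i) hx]
  exact ((shiftEquiv n i) _).2

open Fin.NatCast in
lemma cyc_trans (n i : ℕ) (a b : Fin n) (ha : i ≤ (a : ℕ)) (hb : i ≤ (b : ℕ)) :
    ∃ σ ∈ Subgroup.zpowers (cyc n i), σ a = b := by
  have hi : i < n := lt_of_le_of_lt ha a.isLt
  obtain ⟨m, hm⟩ : ∃ m, n - i = m + 1 := ⟨n - i - 1, by omega⟩
  have key : ∀ (a' b' : Fin (n - i)), ∃ k : ℕ, ((finRotate (n - i))^k) a' = b' := by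
    rw [hm]
    intro a' b'
    exact ⟨(b' - a').val, by
      rw [finRotate_pow_apply, Fin.cast_val_eq_self]; abel⟩
  obtain ⟨k, hk⟩ := key ⟨a.val - i, by omega⟩ ⟨b.val - i, by omega⟩
  refine ⟨(cyc n i)^k, Subgroup.npow_mem_zpowers _ _, ?_⟩
  rw [cyc, ← Equiv.Perm.extendDomain_pow]
  rw [Equiv.Perm.extendDomain_apply_subtype (finRotate (n - i) ^ k) (shiftEquiv n i) ha]
  have h1 : (shiftEquiv n i).symm ⟨a, ha⟩ = ⟨a.val - i, by omega⟩ := rfl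
  rw [h1, hk]
  apply Fin.ext
  show i + (b.val - i) = b.val
  omega

lemma exists_sigma (n : ℕ) : ∀ (D : ℕ) (hD : D ≤ n) (j : Fin D → Fin n),
    Function.Injective j →
    ∃ σ : Fin D → Equiv.Perm (Fin n),
      (∀ d : Fin D, σ d ∈ Subgroup.zpowers (cyc n d.val)) ∧
      ∀ d : Fin D, (List.ofFn σ).reverse.prod (j d) = Fin.castLE hD d := by
  intro D
  induction D with
  | zero => exact fun hD j hj => ⟨fun d => 1, fun d => d.elim0, fun d => d.elim0⟩
  | succ D IH =>
    intro hD j hj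
    obtain ⟨σ', hmem', hact'⟩ := IH (by omega) (j ∘ Fin.castSucc)
      (hj.comp (Fin.castSucc_injective D))
    set g' : Equiv.Perm (Fin n) := (List.ofFn σ').reverse.prod with hg'
    set a : Fin n := g' (j (Fin.last D)) with ha
    have hDn : D < n := by omega
    have haD : D ≤ (a : ℕ) := by
      by_contra hlt
      push_neg at hlt
      have h1 := hact' ⟨a.val, hlt⟩
      have h2 : g' ((j ∘ Fin.castSucc) ⟨a.val, hlt⟩) = a := by
        rw [h1]; exact Fin.ext rfl
      have h3 := hj (g'.injective h2)
      have := congrArg Fin.val h3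
      simp [Fin.last] at this
      omega
    obtain ⟨τ, hτmem, hτa⟩ := cyc_trans n D a ⟨D, hDn⟩ haD (le_refl D)
    have hprod : (List.ofFn (Fin.snoc σ' τ : Fin (D+1) → Equiv.Perm (Fin n))).reverse.prod
        = τ * g' := by
      rw [List.ofFn_succ']
      simp only [Fin.snoc_castSucc, Fin.snoc_last, List.concat_eq_append,
        List.reverse_append, List.reverse_cons, List.reverse_nil, List.nil_append,
        List.cons_append, List.prod_cons]
      rfl
    refine ⟨Fin.snoc σ' τ, ?_, ?_⟩
    · intro d
      refine Fin.lastCases ?_ ?_ d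
      · rw [Fin.snoc_last]; exact hτmem
      · intro e; rw [Fin.snoc_castSucc]; exact hmem' e
    · intro d
      rw [hprod]
      refine Fin.lastCases ?_ ?_ d
      · rw [Equiv.Perm.mul_apply, ← ha, hτa]
        exact Fin.ext rfl
      · intro e
        rw [Equiv.Perm.mul_apply]
        have h1 : g' (j (Fin.castSucc e)) = Fin.castLE (by omega) e := hact' e
        rw [h1, cyc_mem_fix hτmem (by simp)]
        exact Fin.ext rfl

/-- **Normalization (Lemma 2).** Let `n ≥ D` and let `j` be a tuple of `D` pairwise
distinct elements of `Fin n`. Then there is a unique `g ∈ H_D` with `g (j d) = d` for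
all `d`; consequently `j ↦ g` is a bijection from injective `D`-tuples onto `H_D`. -/
theorem HD_normalization (n D : ℕ) (hD : D ≤ n) :
    (∀ j : Fin D → Fin n, Function.Injective j →
      ∃! g : Equiv.Perm (Fin n),
        g ∈ HD n D ∧ ∀ d : Fin D, g (j d) = Fin.castLE hD d) ∧
    ∃ e : {j : Fin D → Fin n // Function.Injective j} ≃ HD n D,
      ∀ (j : {j : Fin D → Fin n // Function.Injective j}) (d : Fin D),
        (e j : Equiv.Perm (Fin n)) ((j : Fin D → Fin n) d) = Fin.castLE hD d := by
  classical
  have hex : ∀ j : Fin D → Fin n, Function.Injective j →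
      ∃ g, g ∈ HD n D ∧ ∀ d : Fin D, g (j d) = Fin.castLE hD d := by
    intro j hj
    obtain ⟨σ, h1, h2⟩ := exists_sigma n D hD j hj
    exact ⟨_, ⟨σ, h1, rfl⟩, h2⟩
  set Φ : HD n D → {j : Fin D → Fin n // Function.Injective j} :=
    fun g => ⟨fun d => (g : Equiv.Perm (Fin n))⁻¹ (Fin.castLE hD d),
      fun d e h => Fin.castLE_injective hD ((g : Equiv.Perm (Fin n))⁻¹.injective h)⟩
    with hΦ
  have hsurj : Function.Surjective Φ := by
    rintro ⟨j, hj⟩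
    obtain ⟨g, hg, hact⟩ := hex j hj
    refine ⟨⟨g, hg⟩, Subtype.ext (funext fun d => ?_)⟩
    show g⁻¹ (Fin.castLE hD d) = j d
    rw [← hact d, Equiv.Perm.inv_def, Equiv.symm_apply_apply]
  -- cardinality bound for HD
  have hcard1 : Nat.card (HD n D) ≤ n.descFactorial D := by
    set F : (∀ d : Fin D, Subgroup.zpowers (cyc n d.val)) → HD n D :=
      fun σ => ⟨(List.ofFn (fun d => (σ d : Equiv.Perm (Fin n)))).reverse.prod,
        ⟨fun d => (σ d : Equiv.Perm (Fin n)), fun d => (σ d).2, rfl⟩⟩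
    have hFsurj : Function.Surjective F := by
      rintro ⟨g, σ, hmem, rfl⟩
      exact ⟨fun d => ⟨σ d, hmem d⟩, rfl⟩
    calc Nat.card (HD n D) ≤ Nat.card (∀ d : Fin D, Subgroup.zpowers (cyc n d.val)) :=
          Nat.card_le_card_of_surjective F hFsurj
      _ = ∏ d : Fin D, Nat.card (Subgroup.zpowers (cyc n d.val)) := Nat.card_pi
      _ = ∏ d : Fin D, (n - d.val) := by
          refine Finset.prod_congr rfl fun d _ => ?_
          rw [Nat.card_zpowers, orderOf_cyc (by omega)]
      _ = ∏ d ∈ Finset.range D, (n - d) := Fin.prod_univ_eq_prod_range _ _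
      _ = n.descFactorial D := (Nat.descFactorial_eq_prod_range n D).symm
  have hcard2 : Nat.card {j : Fin D → Fin n // Function.Injective j}
      = n.descFactorial D := by
    rw [Nat.card_congr (Equiv.subtypeInjectiveEquivEmbedding (Fin D) (Fin n)),
      Nat.card_eq_fintype_card, Fintype.card_embedding_eq, Fintype.card_fin,
      Fintype.card_fin]
  have hcardeq : Nat.card (HD n D) = Nat.card {j : Fin D → Fin n // Function.Injective j} := by
    have := Nat.card_le_card_of_surjective Φ hsurj
    omega
  have hbij : Function.Bijective Φ :=
    (Nat.bijective_iff_surjective_and_card Φ).mpr ⟨hsurj, hcardeq⟩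
  set e0 : HD n D ≃ {j : Fin D → Fin n // Function.Injective j} :=
    Equiv.ofBijective Φ hbij with he0
  have key : ∀ (j : {j : Fin D → Fin n // Function.Injective j}) (d : Fin D),
      ((e0.symm j : HD n D) : Equiv.Perm (Fin n)) ((j : Fin D → Fin n) d)
        = Fin.castLE hD d := by
    intro j d
    have h1 : Φ (e0.symm j) = j := e0.apply_symm_apply j
    have h2 : ((e0.symm j : HD n D) : Equiv.Perm (Fin n))⁻¹ (Fin.castLE hD d)
        = (j : Fin D → Fin n) d := congrFun (congrArg Subtype.val h1) d
    rw [← h2, Equiv.Perm.inv_def, Equiv.apply_symm_apply]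
  constructor
  · intro j hj
    obtain ⟨g, hg, hact⟩ := hex j hj
    refine ⟨g, ⟨hg, hact⟩, ?_⟩
    rintro g' ⟨hg', hact'⟩
    have h1 : Φ ⟨g', hg'⟩ = ⟨j, hj⟩ := by
      refine Subtype.ext (funext fun d => ?_)
      show g'⁻¹ (Fin.castLE hD d) = j d
      rw [← hact' d, Equiv.Perm.inv_def, Equiv.symm_apply_apply]
    have h2 : Φ ⟨g, hg⟩ = ⟨j, hj⟩ := by
      refine Subtype.ext (funext fun d => ?_)
      show g⁻¹ (Fin.castLE hD d) = j d
      rw [← hact d, Equiv.Perm.inv_def, Equiv.symm_apply_apply]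
    have := hbij.injective (h1.trans h2.symm)
    exact congrArg Subtype.val this
  · exact ⟨e0.symm, key⟩
end

section
/- The power sums p_1, …, p_n, where p_i(x) = x_1^i + ⋯ + x_n^i, generate the ring of S_n-invariant polynomials ℝ[x_1,…,x_n]^{S_n}: every S_n-invariant polynomial f can be written as f = P(p_1, …, p_n) for some polynomial P in n variables. Since each p_i = n · γ_{C_n}(x_1^i) is obtained by applying the Reynolds operator to a one-variable polynomial, the Reynolds dimension of S_n acting on ℝ^n is 1. -/
open MvPolynomial
open Fin.NatCast

private lemma finRotate_pow_zero_apply {m : ℕ} (k : ℕ) :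
    (finRotate (m + 1) ^ k) 0 = (k : Fin (m + 1)) := by
  induction k with
  | zero => simp
  | succ k ih =>
    rw [pow_succ', Equiv.Perm.mul_apply, ih, finRotate_succ_apply, Nat.cast_add, Nat.cast_one]

private lemma psum_mem_range (n : ℕ) {j : ℕ} (h1 : 1 ≤ j) (h2 : j ≤ n) :
    psum (Fin n) ℝ j ∈
      (aeval (fun k : Fin n => psum (Fin n) ℝ (k.val + 1)) :
        MvPolynomial (Fin n) ℝ →ₐ[ℝ] MvPolynomial (Fin n) ℝ).range := by
  rw [AlgHom.mem_range]
  refine ⟨X ⟨j - 1, by omega⟩, ?_⟩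
  rw [aeval_X]
  congr 1
  simp only [Fin.val_mk]
  omega

private lemma esymm_mem_range (n : ℕ) : ∀ k, k ≤ n →
    esymm (Fin n) ℝ k ∈
      (aeval (fun k : Fin n => psum (Fin n) ℝ (k.val + 1)) :
        MvPolynomial (Fin n) ℝ →ₐ[ℝ] MvPolynomial (Fin n) ℝ).range := by
  intro k
  induction k using Nat.strong_induction_on with
  | _ k ih =>
    intro hk
    set S := (aeval (fun k : Fin n => psum (Fin n) ℝ (k.val + 1)) :
        MvPolynomial (Fin n) ℝ →ₐ[ℝ] MvPolynomial (Fin n) ℝ).range with hS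
    rcases Nat.eq_zero_or_pos k with rfl | hk0
    · rw [esymm_zero]
      exact one_mem S
    have hNewton := MvPolynomial.mul_esymm_eq_sum (Fin n) ℝ k
    have hkR : (k : ℝ) ≠ 0 := Nat.cast_ne_zero.mpr (by omega)
    have hcast : ((k : ℕ) : MvPolynomial (Fin n) ℝ) = C (k : ℝ) := by
      simp [map_natCast]
    have key : esymm (Fin n) ℝ k =
        C ((k : ℝ)⁻¹) * ((k : MvPolynomial (Fin n) ℝ) * esymm (Fin n) ℝ k) := by
      rw [← mul_assoc, hcast, ← C_mul, inv_mul_cancel₀ hkR, C_1, one_mul]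
    rw [key, hNewton]
    refine mul_mem (S.algebraMap_mem _) (mul_mem (pow_mem (neg_mem (one_mem S)) _) ?_)
    refine Subalgebra.sum_mem S ?_
    intro a ha
    rw [Finset.mem_filter, Finset.HasAntidiagonal.mem_antidiagonal] at ha
    refine mul_mem (mul_mem (pow_mem (neg_mem (one_mem S)) _) ?_) ?_
    · exact ih a.1 ha.2 (by omega)
    · exact psum_mem_range n (by omega) (by omega)

/-- **Power sums generate the invariant ring, and the Reynolds dimension of
`S_n` acting on `ℝ^n` is 1.**  Every `S_n`-invariant (symmetric) polynomial
`f ∈ ℝ[x_1,…,x_n]` can be written as `f = P(p_1, …, p_n)` where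
`p_i = x_1^i + ⋯ + x_n^i`.  Moreover each power sum `p_i` is obtained by
applying the Reynolds operator of the cyclic group `C_n` to the one-variable
polynomial `x_1^i`:  `p_i = n · γ_{C_n}(x_1^i) = ∑_{k<n} (finRotate n)^k · x_1^i`,
so the Reynolds dimension of `S_n` is `1`. -/
theorem powerSums_generate_and_reynolds_dimension_one (n : ℕ) (hn : 1 ≤ n) :
    (∀ f : MvPolynomial (Fin n) ℝ, f.IsSymmetric →
      ∃ P : MvPolynomial (Fin n) ℝ,
        f = aeval (fun k : Fin n => psum (Fin n) ℝ (k.val + 1)) P) ∧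
    (∀ i : ℕ, psum (Fin n) ℝ i =
      ∑ k ∈ Finset.range n,
        rename (⇑(finRotate n ^ k)) ((X ⟨0, hn⟩ : MvPolynomial (Fin n) ℝ) ^ i)) := by
  constructor
  · intro f hf
    obtain ⟨Q, hQ⟩ := esymmAlgHom_surjective (σ := Fin n) (R := ℝ) (n := n)
      (by simp) ⟨f, hf⟩
    have hfeq : f = aeval (fun i : Fin n => esymm (Fin n) ℝ (i.val + 1)) Q := by
      rw [← esymmAlgHom_apply, hQ]
    set S := (aeval (fun k : Fin n => psum (Fin n) ℝ (k.val + 1)) :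
        MvPolynomial (Fin n) ℝ →ₐ[ℝ] MvPolynomial (Fin n) ℝ).range with hS
    have hmem : f ∈ S := by
      rw [hfeq]
      have h := Subalgebra.mvPolynomial_aeval_coe S
        (fun i : Fin n => ⟨esymm (Fin n) ℝ (i.val + 1),
          esymm_mem_range n (i.val + 1) (by omega)⟩) Q
      rw [show (fun i : Fin n => esymm (Fin n) ℝ (i.val + 1)) =
        (fun i : Fin n => ((⟨esymm (Fin n) ℝ (i.val + 1),
          esymm_mem_range n (i.val + 1) (by omega)⟩ : S) : MvPolynomial (Fin n) ℝ))
        from rfl, h]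
      exact Subtype.coe_prop _
    obtain ⟨P, hP⟩ := hmem
    exact ⟨P, hP.symm⟩
  · intro i
    haveI : NeZero n := ⟨by omega⟩
    have hrot : ∀ k : ℕ, (finRotate n ^ k) ⟨0, hn⟩ = ((k : ℕ) : Fin n) := by
      obtain ⟨m, rfl⟩ : ∃ m, n = m + 1 := ⟨n - 1, by omega⟩
      intro k
      exact finRotate_pow_zero_apply k
    simp_rw [map_pow, rename_X, hrot]
    rw [← Fin.sum_univ_eq_sum_range
      (fun k => (X ((k : ℕ) : Fin n) : MvPolynomial (Fin n) ℝ) ^ i)]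
    simp [psum, Fin.cast_val_eq_self]
end
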